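/- There exists a function d : ℕ → ℕ such that for every r ≥ 1, every finite subgroup of GL_r(ℤ) has order at most d(r), and moreover d is monotone: d(n) ≤ d(n+1) for all n (witnessed by the block-diagonal embedding GL_n(ℤ) ↪ GL_{n+1}(ℤ)). -/

import Mathlib

open Matrix Finset

variable {r : ℕ}

private lemma dvd_mul_entries (d : ℤ) (A B : Matrix (Fin r) (Fin r) ℤ)
    (hA : ∀ i j, d ∣ A i j) : ∀ i j, d ∣ (A * B) i j := by
  intro i j
  rw [Matrix.mul_apply]
  exact Finset.dvd_sum fun l _ => (hA i l).mul_right _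

private lemma dvd_pow_entries {k : ℕ} (M : Matrix (Fin r) (Fin r) ℤ)
    (hM : ∀ i j, (3:ℤ)^k ∣ M i j) : ∀ m : ℕ, 1 ≤ m →
    ∀ i j, (3:ℤ)^(m*k) ∣ (M ^ m) i j := by
  have H : ∀ n : ℕ, ∀ i j, (3:ℤ)^((n+1)*k) ∣ (M ^ (n+1)) i j := by
    intro n
    induction n with
    | zero => simpa using hM
    | succ n ih =>
      intro i j
      rw [pow_succ', show (n+1+1)*k = k + (n+1)*k by ring, pow_add, Matrix.mul_apply]
      exact Finset.dvd_sum fun l _ => mul_dvd_mul (hM i l) (ih l j)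
  intro m hm
  obtain ⟨n, rfl⟩ := Nat.exists_eq_add_of_le hm
  simpa [add_comm] using H n

private lemma mul_natCast_eq_smul (A : Matrix (Fin r) (Fin r) ℤ) (c : ℕ) :
    A * (c : Matrix (Fin r) (Fin r) ℤ) = c • A := by
  rw [nsmul_eq_mul, (Nat.cast_commute c A).eq]

/-- Key step: entries divisible by `3^k` (`k ≥ 1`) and `(1+M)^p = 1` force `3^(k+1)`. -/
private lemma key_step {k : ℕ} (hk : 1 ≤ k) {p : ℕ} (hp : p.Prime)
    (M : Matrix (Fin r) (Fin r) ℤ) (hM : ∀ i j, (3:ℤ)^k ∣ M i j)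
    (hpow : (1 + M) ^ p = 1) : ∀ i j, (3:ℤ)^(k+1) ∣ M i j := by
  have expand := (Commute.one_right M).add_pow p
  have E : (1 : Matrix (Fin r) (Fin r) ℤ) =
      ∑ m ∈ range (p+1), (p.choose m) • M ^ m := by
    rw [← hpow, add_comm, expand]
    refine Finset.sum_congr rfl fun m _ => ?_
    rw [one_pow, mul_one, mul_natCast_eq_smul]
  have hp2 : 2 ≤ p := hp.two_le
  rw [Finset.range_eq_Ico, Finset.sum_eq_sum_Ico_succ_bot (by omega),
      Finset.sum_eq_sum_Ico_succ_bot (by omega : (1:ℕ) < p+1)] at E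
  simp only [pow_zero, Nat.choose_zero_right, one_smul, pow_one, Nat.choose_one_right] at E
  set T : Matrix (Fin r) (Fin r) ℤ := ∑ m ∈ Ico 2 (p+1), (p.choose m) • M ^ m with hT
  have hPM : (p • M : Matrix (Fin r) (Fin r) ℤ) = -T := by
    have := E
    abel_nf at this ⊢
    linear_combination (norm := abel_nf) -this
  intro i j
  have hent : (p : ℤ) * M i j = -(T i j) := by
    have := congrFun (congrFun hPM i) j
    simpa [nsmul_eq_mul] using this
  by_cases hp3 : p = 3
  · subst hp3
    have hIco : Finset.Ico 2 4 = ({2, 3} : Finset ℕ) := rfl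
    have hTval : T = (3:ℤ) • M ^ 2 + M ^ 3 := by
      rw [hT, hIco, Finset.sum_insert (by decide), Finset.sum_singleton]
      norm_num [← Nat.cast_smul_eq_nsmul ℤ]
    have h2 : (3:ℤ)^(k+2) ∣ (T i j) := by
      rw [hTval]
      have e2 : (3:ℤ)^(k+2) ∣ (3:ℤ) * (M ^ 2) i j := by
        have := dvd_pow_entries M hM 2 (by norm_num) i j
        calc (3:ℤ)^(k+2) = 3 * 3^(k+1) := by ring
        _ ∣ 3 * (M^2) i j := mul_dvd_mul_left 3 (dvd_trans (pow_dvd_pow 3 (by omega)) this)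
      have e3 : (3:ℤ)^(k+2) ∣ (M ^ 3) i j := by
        have := dvd_pow_entries M hM 3 (by norm_num) i j
        exact dvd_trans (pow_dvd_pow 3 (by omega)) this
      have heq : ((3:ℤ) • M ^ 2 + M ^ 3) i j = 3 * (M ^ 2) i j + (M ^ 3) i j := by
        rw [Matrix.add_apply, Matrix.smul_apply, smul_eq_mul]
      rw [heq]
      exact dvd_add e2 e3
    have : (3:ℤ)^(k+2) ∣ (3:ℤ) * M i j := by
      rw [show ((3:ℕ):ℤ) = (3:ℤ) from rfl] at hent
      rw [hent]; exact h2.neg_right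
    have h3 : (3:ℤ) * 3^(k+1) ∣ (3:ℤ) * M i j := by
      calc (3:ℤ) * 3^(k+1) = 3^(k+2) := by ring
      _ ∣ _ := this
    exact (mul_dvd_mul_iff_left (by norm_num : (3:ℤ) ≠ 0)).mp h3
  · have hTd : (3:ℤ)^(k+1) ∣ T i j := by
      rw [hT]
      rw [Matrix.sum_apply]
      refine Finset.dvd_sum fun m hm => ?_
      have hm2 : 2 ≤ m := (Finset.mem_Ico.mp hm).1
      have := dvd_pow_entries M hM m (by omega) i j
      have h2k : (3:ℤ)^(k+1) ∣ (M ^ m) i j :=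
        dvd_trans (pow_dvd_pow 3 (by nlinarith)) this
      simpa [nsmul_eq_mul] using h2k.mul_left _
    have hdvd : (3:ℤ)^(k+1) ∣ (p:ℤ) * M i j := by rw [hent]; exact hTd.neg_right
    have hcop : IsCoprime ((3:ℤ)^(k+1)) (p:ℤ) := by
      apply IsCoprime.pow_left
      rw [Int.isCoprime_iff_gcd_eq_one]
      exact_mod_cast
        (Nat.coprime_primes (by norm_num) hp).mpr (fun h => hp3 h.symm)
    exact hcop.dvd_of_dvd_mul_left hdvd

private lemma torsion_ker {r : ℕ} (A : GL (Fin r) ℤ) (hA : IsOfFinOrder A)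
    (hker : Matrix.GeneralLinearGroup.map (Int.castRingHom (ZMod 3)) A = 1) : A = 1 := by
  by_contra hne
  have hord : orderOf A ≠ 0 := (hA.orderOf_pos).ne'
  have hord1 : orderOf A ≠ 1 := fun h => hne (orderOf_eq_one_iff.mp h)
  set q := (orderOf A).minFac with hq
  have hqp : q.Prime := Nat.minFac_prime hord1
  have hqdvd : q ∣ orderOf A := Nat.minFac_dvd _
  set B := A ^ (orderOf A / q) with hB
  have hordB : orderOf B = q := orderOf_pow_orderOf_div hord hqdvd
  have hBker : Matrix.GeneralLinearGroup.map (Int.castRingHom (ZMod 3)) B = 1 := by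
    rw [hB, map_pow, hker, one_pow]
  set M : Matrix (Fin r) (Fin r) ℤ := (B : Matrix (Fin r) (Fin r) ℤ) - 1 with hM
  have hBval : (B : Matrix (Fin r) (Fin r) ℤ) = 1 + M := by rw [hM]; abel
  have hmap : ((B : Matrix (Fin r) (Fin r) ℤ)).map (Int.cast : ℤ → ZMod 3)
      = (1 : Matrix (Fin r) (Fin r) (ZMod 3)) := by
    have := congrArg Units.val hBker
    simpa [Matrix.GeneralLinearGroup.map, RingHom.mapMatrix_apply] using this
  have hMdvd : ∀ i j, (3:ℤ)^1 ∣ M i j := by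
    intro i j
    have h1 : ((B : Matrix (Fin r) (Fin r) ℤ) i j : ZMod 3)
        = (1 : Matrix (Fin r) (Fin r) (ZMod 3)) i j := by
      rw [← hmap, Matrix.map_apply]
    have h0 : ((M i j : ℤ) : ZMod 3) = 0 := by
      rw [hM, Matrix.sub_apply]
      push_cast
      rw [h1]
      by_cases hij : i = j <;> simp [Matrix.one_apply, hij]
    rw [pow_one]
    exact_mod_cast (ZMod.intCast_zmod_eq_zero_iff_dvd _ 3).mp h0
  have hpowB : (1 + M) ^ q = 1 := by
    have hBq : (B ^ q : GL (Fin r) ℤ) = 1 := by rw [← hordB]; exact pow_orderOf_eq_one B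
    have : ((B : Matrix (Fin r) (Fin r) ℤ)) ^ q = 1 := by
      rw [← Units.val_pow_eq_pow_val, hBq, Units.val_one]
    rw [← hBval]
    exact this
  have hall : ∀ k : ℕ, 1 ≤ k → ∀ i j, (3:ℤ)^k ∣ M i j := by
    intro k hk
    induction k with
    | zero => omega
    | succ n ih =>
      rcases Nat.eq_or_lt_of_le hk with h | h
      · rw [← h]; exact hMdvd
      · exact key_step (by omega) hqp M (ih (by omega)) hpowB
  have hM0 : M = 0 := by
    ext i j
    simp only [Matrix.zero_apply]
    by_contra h0
    set n := (M i j).natAbs with hn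
    have hpos : 1 ≤ n := Int.natAbs_pos.mpr h0
    have hdvd : (3:ℤ)^n ∣ M i j := hall n hpos i j
    have hle : (3:ℤ)^n ≤ |M i j| := Int.le_of_dvd (abs_pos.mpr h0) ((dvd_abs _ _).mpr hdvd)
    have hlt : |M i j| < (3:ℤ)^n := by
      rw [Int.abs_eq_natAbs, ← hn]
      exact_mod_cast Nat.lt_pow_self (n := n) (by norm_num)
    linarith
  have hB1 : B = 1 := by
    apply Units.ext
    rw [hBval, hM0, add_zero, Units.val_one]
  rw [hB1, orderOf_one] at hordB
  exact hqp.ne_one hordB.symm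

set_option maxHeartbeats 2000000 in
/-- Minkowski's theorem: there is a function `d : ℕ → ℕ` bounding the order of
every finite subgroup of `GL r ℤ`, and `d` can be taken monotone (witnessed by the
block-diagonal embedding `GL n ℤ ↪ GL (n+1) ℤ`). -/
theorem stmt3 :
    ∃ d : ℕ → ℕ,
      (∀ r : ℕ, 1 ≤ r → ∀ H : Subgroup (GL (Fin r) ℤ),
        (H : Set (GL (Fin r) ℤ)).Finite → Nat.card H ≤ d r) ∧
      (∀ n : ℕ, d n ≤ d (n + 1)) := by
  refine ⟨fun r => 3 ^ (r * r), ?_, ?_⟩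
  · intro r _ H hfin
    haveI : Finite H := hfin.to_subtype
    set π := Matrix.GeneralLinearGroup.map (n := Fin r) (Int.castRingHom (ZMod 3)) with hπ
    have hinj : Function.Injective (fun h : H => π (h : GL (Fin r) ℤ)) := by
      intro x y hxy
      have hmem : (x : GL (Fin r) ℤ) * (y : GL (Fin r) ℤ)⁻¹ ∈ H :=
        H.mul_mem x.2 (H.inv_mem y.2)
      have hfo : IsOfFinOrder ((x : GL (Fin r) ℤ) * (y : GL (Fin r) ℤ)⁻¹) := by
        have h' : IsOfFinOrder (⟨_, hmem⟩ : H) := isOfFinOrder_of_finite _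
        exact H.subtype.isOfFinOrder h'
      have hk : π ((x : GL (Fin r) ℤ) * (y : GL (Fin r) ℤ)⁻¹) = 1 := by
        rw [π.map_mul, π.map_inv]
        simp only at hxy
        rw [hxy, mul_inv_cancel]
      have := torsion_ker _ hfo hk
      have : (x : GL (Fin r) ℤ) = (y : GL (Fin r) ℤ) := by
        rwa [mul_inv_eq_one] at this
      exact Subtype.ext this
    have h1 : Nat.card H ≤ Nat.card (GL (Fin r) (ZMod 3)) :=
      Nat.card_le_card_of_injective _ hinj
    have h2 : Nat.card (GL (Fin r) (ZMod 3)) ≤ Nat.card (Matrix (Fin r) (Fin r) (ZMod 3)) :=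
      Nat.card_le_card_of_injective Units.val (fun _ _ h => Units.ext h)
    have h3 : Nat.card (Matrix (Fin r) (Fin r) (ZMod 3)) = 3 ^ (r * r) := by
      rw [Nat.card_eq_fintype_card]
      show Fintype.card (Fin r → Fin r → ZMod 3) = 3 ^ (r * r)
      simp [Fintype.card_fun, pow_mul]
    simp only at h1 ⊢
    omega
  · intro n
    exact Nat.pow_le_pow_right (by norm_num) (by nlinarith)
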